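/- arXiv:1209.1573 — 4 statements merged into one kernel-verified Lean document; each statement's English description precedes it below -/
import Mathlib

section
/- Let n ≥ 1, let a_1 ≤ a_2 ≤ … ≤ a_n be positive reals, and let t satisfy 0 < t ≤ 1/(2 a_n). Then ( ∏_{j=1}^n √( a_j/(π(1 − exp(−2 a_j t))) ) ) · exp( −16 a_n/(1 − exp(−2 a_n t)) ) ≤ exp(−8/t) · (1/(tπ))^{n/2}. If moreover 1/(2 a_n) ≤ 16/n, then the left-hand side is at most exp(−16 a_n) · (2 a_n/π)^{n/2}. -/
open Real

private lemma half_le_one_sub_exp {x : ℝ} (hx0 : 0 < x) (hx1 : x ≤ 1) :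
    x / 2 ≤ 1 - Real.exp (-x) := by
  have h1 := Real.add_one_le_exp x
  have h2 : Real.exp (-x) * Real.exp x = 1 := by
    rw [← Real.exp_add]; simp
  have h3 := Real.exp_pos (-x)
  nlinarith [mul_le_mul_of_nonneg_left h1 h3.le]

private lemma one_sub_exp_le (x : ℝ) : 1 - Real.exp (-x) ≤ x := by
  have := Real.add_one_le_exp (-x); linarith

/-- Step 1 of the Green function upper bound: for a nondecreasing sequence of positive reals
`a_1 ≤ … ≤ a_n` and `0 < t ≤ 1/(2 a_n)`, the Ornstein-Uhlenbeck transition density factor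
`∏_j √(a_j/(π(1 - e^{-2 a_j t}))) ⋅ exp(-16 a_n/(1 - e^{-2 a_n t}))` is at most
`exp(-8/t) (1/(tπ))^(n/2)`; and if moreover `1/(2 a_n) ≤ 16/n`, it is at most
`exp(-16 a_n) (2 a_n/π)^(n/2)`. -/
theorem OU_green_function_upper_bound_step1
    (n : ℕ) (hn : 1 ≤ n) (a : Fin n → ℝ) (hpos : ∀ j, 0 < a j) (hmono : Monotone a)
    (t : ℝ) (ht : 0 < t) (htn : t ≤ 1 / (2 * a ⟨n - 1, by omega⟩)) :
    (∏ j, Real.sqrt (a j / (π * (1 - Real.exp (-2 * a j * t))))) *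
        Real.exp (-16 * a ⟨n - 1, by omega⟩ /
          (1 - Real.exp (-2 * a ⟨n - 1, by omega⟩ * t))) ≤
      Real.exp (-8 / t) * (1 / (t * π)) ^ ((n : ℝ) / 2) ∧
    (1 / (2 * a ⟨n - 1, by omega⟩) ≤ 16 / (n : ℝ) →
      (∏ j, Real.sqrt (a j / (π * (1 - Real.exp (-2 * a j * t))))) *
          Real.exp (-16 * a ⟨n - 1, by omega⟩ /
            (1 - Real.exp (-2 * a ⟨n - 1, by omega⟩ * t))) ≤
        Real.exp (-16 * a ⟨n - 1, by omega⟩) *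
          (2 * a ⟨n - 1, by omega⟩ / π) ^ ((n : ℝ) / 2)) := by
  set N : Fin n := ⟨n - 1, by omega⟩ with hNdef
  have hNpos : 0 < a N := hpos N
  have haN : ∀ j, a j ≤ a N := by
    intro j
    apply hmono
    rw [Fin.le_def]
    have := j.isLt
    simp only [hNdef]
    omega
  have htN : 2 * a N * t ≤ 1 := by
    rw [le_div_iff₀ (by positivity)] at htn
    nlinarith
  have hx1 : ∀ j, 2 * a j * t ≤ 1 := by
    intro j
    nlinarith [haN j, (hpos j).le, ht.le]
  have hE : ∀ j, a j * t ≤ 1 - Real.exp (-2 * a j * t) := by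
    intro j
    have h := half_le_one_sub_exp (x := 2 * a j * t) (by nlinarith [hpos j]) (hx1 j)
    have he : -(2 * a j * t) = -2 * a j * t := by ring
    rw [he] at h
    linarith
  have h1E : ∀ j, 0 < 1 - Real.exp (-2 * a j * t) := by
    intro j
    have : Real.exp (-2 * a j * t) < 1 := by
      apply Real.exp_lt_one_iff.mpr
      nlinarith [hpos j]
    linarith
  -- factorwise bound
  have hfac : ∀ j, Real.sqrt (a j / (π * (1 - Real.exp (-2 * a j * t)))) ≤
      Real.sqrt (1 / (t * π)) := by
    intro j
    apply Real.sqrt_le_sqrt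
    rw [div_le_div_iff₀ (mul_pos pi_pos (h1E j)) (by positivity)]
    nlinarith [hE j, pi_pos, hpos j, h1E j]
  have hprodnn : (0:ℝ) ≤ ∏ j, Real.sqrt (a j / (π * (1 - Real.exp (-2 * a j * t)))) :=
    Finset.prod_nonneg fun j _ => Real.sqrt_nonneg _
  have hprod : (∏ j, Real.sqrt (a j / (π * (1 - Real.exp (-2 * a j * t))))) ≤
      Real.sqrt (1 / (t * π)) ^ n := by
    calc (∏ j, Real.sqrt (a j / (π * (1 - Real.exp (-2 * a j * t)))))
        ≤ ∏ _j : Fin n, Real.sqrt (1 / (t * π)) :=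
          Finset.prod_le_prod (fun j _ => Real.sqrt_nonneg _) (fun j _ => hfac j)
      _ = Real.sqrt (1 / (t * π)) ^ n := by simp
  have hpow : Real.sqrt (1 / (t * π)) ^ n = (1 / (t * π)) ^ ((n:ℝ) / 2) := by
    rw [Real.sqrt_eq_rpow, ← Real.rpow_natCast ((1 / (t * π)) ^ ((1:ℝ)/2)) n,
      ← Real.rpow_mul (by positivity)]
    congr 1
    ring
  have hexp : Real.exp (-16 * a N / (1 - Real.exp (-2 * a N * t))) ≤ Real.exp (-8 / t) := by
    apply Real.exp_le_exp.mpr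
    rw [div_le_div_iff₀ (h1E N) ht]
    have h := one_sub_exp_le (2 * a N * t)
    have he : -(2 * a N * t) = -2 * a N * t := by ring
    rw [he] at h
    nlinarith
  have part1 : (∏ j, Real.sqrt (a j / (π * (1 - Real.exp (-2 * a j * t))))) *
      Real.exp (-16 * a N / (1 - Real.exp (-2 * a N * t))) ≤
      Real.exp (-8 / t) * (1 / (t * π)) ^ ((n : ℝ) / 2) := by
    calc (∏ j, Real.sqrt (a j / (π * (1 - Real.exp (-2 * a j * t))))) *
        Real.exp (-16 * a N / (1 - Real.exp (-2 * a N * t)))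
        ≤ Real.sqrt (1 / (t * π)) ^ n * Real.exp (-8 / t) :=
          mul_le_mul hprod hexp (Real.exp_pos _).le (by positivity)
      _ = Real.exp (-8 / t) * (1 / (t * π)) ^ ((n : ℝ) / 2) := by rw [hpow]; ring
  refine ⟨part1, fun hs => ?_⟩
  have hs0 : 0 < 1 / (2 * a N) := by positivity
  set s : ℝ := 1 / (2 * a N) with hsdef
  have hts : t ≤ s := htn
  have key : Real.exp (-8 / t) * (1 / (t * π)) ^ ((n:ℝ) / 2) ≤
      Real.exp (-16 * a N) * (2 * a N / π) ^ ((n:ℝ) / 2) := by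
    have h1 : (-16 : ℝ) * a N = -8 / s := by
      rw [hsdef]; field_simp; ring
    have h2 : 2 * a N / π = 1 / (s * π) := by
      rw [hsdef]; field_simp
    rw [h1, h2]
    have hn2 : (n:ℝ) / 2 ≤ 8 / s := by
      have hnp : (0:ℝ) < n := by exact_mod_cast hn
      rw [le_div_iff₀ (by positivity)] at hs ⊢
      nlinarith
    have hst1 : (0:ℝ) ≤ s / t - 1 := by
      have : 1 ≤ s / t := (one_le_div ht).mpr hts
      linarith
    have h80 : 8 / t - 8 / s = (8 / s) * (s / t - 1) := by
      field_simp
      try ring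
    have hlog : ((n:ℝ) / 2) * Real.log (s / t) ≤ 8 / t - 8 / s := by
      have hlt : Real.log (s / t) ≤ s / t - 1 := Real.log_le_sub_one_of_pos (by positivity)
      calc ((n:ℝ) / 2) * Real.log (s / t) ≤ ((n:ℝ) / 2) * (s / t - 1) :=
            mul_le_mul_of_nonneg_left hlt (by positivity)
        _ ≤ (8 / s) * (s / t - 1) := mul_le_mul_of_nonneg_right hn2 hst1
        _ = 8 / t - 8 / s := h80.symm
    have hsplit : (1 / (t * π)) ^ ((n:ℝ) / 2) =
        (1 / (s * π)) ^ ((n:ℝ) / 2) * (s / t) ^ ((n:ℝ) / 2) := by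
      rw [← Real.mul_rpow (by positivity) (by positivity)]
      congr 1
      field_simp
      try ring
    rw [hsplit, Real.rpow_def_of_pos (show (0:ℝ) < s / t by positivity)]
    have hmain : Real.exp (-8 / t) * Real.exp (Real.log (s / t) * ((n:ℝ) / 2)) ≤
        Real.exp (-8 / s) := by
      rw [← Real.exp_add, Real.exp_le_exp, mul_comm (Real.log (s / t)) ((n:ℝ) / 2)]
      have e1 : (-8:ℝ) / t = -(8 / t) := by ring
      have e2 : (-8:ℝ) / s = -(8 / s) := by ring
      linarith [hlog]
    calc Real.exp (-8 / t) * ((1 / (s * π)) ^ ((n:ℝ) / 2) *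
          Real.exp (Real.log (s / t) * ((n:ℝ) / 2)))
        = (Real.exp (-8 / t) * Real.exp (Real.log (s / t) * ((n:ℝ) / 2))) *
          (1 / (s * π)) ^ ((n:ℝ) / 2) := by ring
      _ ≤ Real.exp (-8 / s) * (1 / (s * π)) ^ ((n:ℝ) / 2) :=
          mul_le_mul_of_nonneg_right hmain (Real.rpow_nonneg (by positivity) _)
  exact part1.trans key
end

section
/- Let H be a real Hilbert space, m ≥ 1, and let A : Fin m → H → H be vector fields, each twice continuously differentiable. Define (∇_{A^k} h)(x) = (Dh)(x)[A^k(x)], L h = ∑_{k=1}^m ∇_{A^k}(∇_{A^k} h), Γ(f,g) = ∑_{k=1}^m (∇_{A^k} f)(∇_{A^k} g), and Γ₂(f) = (1/2)·L(Γ(f,f)) − Γ(f, Lf). Then for every three times continuously differentiable g : H → ℝ with g(x) > 0 for all x: Γ₂(log∘g) = Γ(g,g)²/g⁴ − Γ(g, Γ(g,g))/g³ + Γ₂(g)/g². -/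
/-- Directional derivative along a vector field `A`: `(∇_A h)(x) = (Dh)(x)[A(x)]`. -/
noncomputable def nablaA {H : Type*} [NormedAddCommGroup H] [NormedSpace ℝ H]
    (A : H → H) (h : H → ℝ) : H → ℝ := fun x => fderiv ℝ h x (A x)

/-- Hörmander-form operator `L = ∑ₖ (∇_{Aᵏ})²`. -/
noncomputable def hormL {H : Type*} [NormedAddCommGroup H] [NormedSpace ℝ H]
    {m : ℕ} (A : Fin m → H → H) (f : H → ℝ) : H → ℝ :=
  fun x => ∑ k, nablaA (A k) (nablaA (A k) f) x

/-- Carré du champ `Γ(f,g) = ∑ₖ (∇_{Aᵏ} f)(∇_{Aᵏ} g)`. -/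
noncomputable def GammaA {H : Type*} [NormedAddCommGroup H] [NormedSpace ℝ H]
    {m : ℕ} (A : Fin m → H → H) (f g : H → ℝ) : H → ℝ :=
  fun x => ∑ k, nablaA (A k) f x * nablaA (A k) g x

/-- Iterated carré du champ `Γ₂(f) = (1/2) L(Γ(f,f)) - Γ(f, Lf)`. -/
noncomputable def Gamma2A {H : Type*} [NormedAddCommGroup H] [NormedSpace ℝ H]
    {m : ℕ} (A : Fin m → H → H) (f : H → ℝ) : H → ℝ :=
  fun x => (1 / 2) * hormL A (GammaA A f f) x - GammaA A f (hormL A f) x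

section helpers
variable {H : Type*} [NormedAddCommGroup H] [NormedSpace ℝ H] (A : H → H)

lemma nablaA_add {f h : H → ℝ} {x : H} (hf : DifferentiableAt ℝ f x)
    (hh : DifferentiableAt ℝ h x) :
    nablaA A (fun y => f y + h y) x = nablaA A f x + nablaA A h x := by
  simp [nablaA, fderiv_fun_add hf hh]

lemma nablaA_sub {f h : H → ℝ} {x : H} (hf : DifferentiableAt ℝ f x)
    (hh : DifferentiableAt ℝ h x) :
    nablaA A (fun y => f y - h y) x = nablaA A f x - nablaA A h x := by
  simp [nablaA, fderiv_fun_sub hf hh]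

lemma nablaA_mul {f h : H → ℝ} {x : H} (hf : DifferentiableAt ℝ f x)
    (hh : DifferentiableAt ℝ h x) :
    nablaA A (fun y => f y * h y) x = nablaA A f x * h x + f x * nablaA A h x := by
  simp [nablaA, fderiv_fun_mul hf hh]; ring

lemma nablaA_const_mul {h : H → ℝ} {x : H} (hh : DifferentiableAt ℝ h x) (c : ℝ) :
    nablaA A (fun y => c * h y) x = c * nablaA A h x := by
  simp [nablaA, fderiv_const_mul hh c]

lemma nablaA_inv {g : H → ℝ} {x : H} (hg : DifferentiableAt ℝ g x) (h0 : g x ≠ 0) :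
    nablaA A (fun y => (g y)⁻¹) x = -(nablaA A g x) * ((g x)⁻¹ * (g x)⁻¹) := by
  have h : HasFDerivAt (fun y => (g y)⁻¹) (-(g x ^ 2)⁻¹ • fderiv ℝ g x) x :=
    (hasDerivAt_inv h0).comp_hasFDerivAt x hg.hasFDerivAt
  simp only [nablaA, h.fderiv, ContinuousLinearMap.coe_smul', Pi.smul_apply, smul_eq_mul]
  rw [sq, mul_inv]; ring

lemma nablaA_log {g : H → ℝ} {x : H} (hg : DifferentiableAt ℝ g x) (h0 : g x ≠ 0) :
    nablaA A (fun y => Real.log (g y)) x = nablaA A g x * (g x)⁻¹ := by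
  have h : HasFDerivAt (fun y => Real.log (g y)) ((g x)⁻¹ • fderiv ℝ g x) x :=
    (Real.hasDerivAt_log h0).comp_hasFDerivAt x hg.hasFDerivAt
  simp only [nablaA, h.fderiv, ContinuousLinearMap.coe_smul', Pi.smul_apply, smul_eq_mul]
  ring

lemma contDiff_nablaA {n : ℕ} {f : H → ℝ} {A : H → H} (hf : ContDiff ℝ (n + 1) f)
    (hA : ContDiff ℝ n A) : ContDiff ℝ n (nablaA A f) := by
  have : ContDiff ℝ n (fderiv ℝ f) := hf.fderiv_right (by exact_mod_cast le_refl _)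
  exact this.clm_apply hA

end helpers

/-- `Γ₂(log g) = Γ(g,g)²/g⁴ - Γ(g, Γ(g,g))/g³ + Γ₂(g)/g²` for positive `g`. -/
theorem Gamma2A_log {H : Type*} [NormedAddCommGroup H] [InnerProductSpace ℝ H]
    {m : ℕ} (hm : 1 ≤ m) (A : Fin m → H → H) (hA : ∀ k, ContDiff ℝ 2 (A k))
    (g : H → ℝ) (hg : ContDiff ℝ 3 g) (hpos : ∀ x, 0 < g x) (x : H) :
    Gamma2A A (fun y => Real.log (g y)) x =
      (GammaA A g g x) ^ 2 / (g x) ^ 4 -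
        GammaA A g (GammaA A g g) x / (g x) ^ 3 +
        Gamma2A A g x / (g x) ^ 2 := by
  have hgne : ∀ z, g z ≠ 0 := fun z => (hpos z).ne'
  have hg1 : Differentiable ℝ g := hg.differentiable (by norm_num)
  have hu : ∀ k, ContDiff ℝ 2 (nablaA (A k) g) := fun k =>
    contDiff_nablaA (n := 2) (by exact_mod_cast hg) (hA k)
  have hud : ∀ k, Differentiable ℝ (nablaA (A k) g) := fun k =>
    (hu k).differentiable (by norm_num)
  have hvd : ∀ k, Differentiable ℝ (nablaA (A k) (nablaA (A k) g)) := fun k =>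
    (contDiff_nablaA (n := 1) (by exact_mod_cast hu k)
      ((hA k).of_le (by norm_num))).differentiable (by norm_num)
  have hΓ : ContDiff ℝ 2 (GammaA A g g) := by
    have : ContDiff ℝ 2 (fun z => ∑ k, nablaA (A k) g z * nablaA (A k) g z) :=
      ContDiff.sum fun k _ => (hu k).mul (hu k)
    exact this
  have hΓd : Differentiable ℝ (GammaA A g g) := hΓ.differentiable (by norm_num)
  have hGd : ∀ k, Differentiable ℝ (nablaA (A k) (GammaA A g g)) := fun k =>
    (contDiff_nablaA (n := 1) (by exact_mod_cast hΓ)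
      ((hA k).of_le (by norm_num))).differentiable (by norm_num)
  have hLgd : Differentiable ℝ (hormL A g) := by
    have : Differentiable ℝ (fun z => ∑ k, nablaA (A k) (nablaA (A k) g) z) :=
      Differentiable.fun_sum fun k _ => hvd k
    exact this
  have hqd : Differentiable ℝ (fun z => (g z)⁻¹) := fun z => (hg1 z).inv (hgne z)
  have hqqd : Differentiable ℝ (fun z => (g z)⁻¹ * (g z)⁻¹) := hqd.mul hqd
  have hqqqd : Differentiable ℝ (fun z => (g z)⁻¹ * (g z)⁻¹ * (g z)⁻¹) := hqqd.mul hqd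
  have dq : ∀ k z, nablaA (A k) (fun y => (g y)⁻¹) z
      = -(nablaA (A k) g z) * ((g z)⁻¹ * (g z)⁻¹) :=
    fun k z => nablaA_inv (A k) (hg1 z) (hgne z)
  have dqq : ∀ k z, nablaA (A k) (fun y => (g y)⁻¹ * (g y)⁻¹) z
      = -2 * nablaA (A k) g z * ((g z)⁻¹ * (g z)⁻¹ * (g z)⁻¹) := by
    intro k z
    rw [nablaA_mul (A k) (hqd z) (hqd z), dq]
    ring
  have dqqq : ∀ k z, nablaA (A k) (fun y => (g y)⁻¹ * (g y)⁻¹ * (g y)⁻¹) z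
      = -3 * nablaA (A k) g z * ((g z)⁻¹ * (g z)⁻¹ * (g z)⁻¹ * (g z)⁻¹) := by
    intro k z
    rw [nablaA_mul (A k) (hqqd z) (hqd z), dqq, dq]
    ring
  have hlogw : ∀ k, nablaA (A k) (fun y => Real.log (g y))
      = fun z => nablaA (A k) g z * (g z)⁻¹ :=
    fun k => funext fun z => nablaA_log (A k) (hg1 z) (hgne z)
  have hΓlog : GammaA A (fun y => Real.log (g y)) (fun y => Real.log (g y))
      = fun z => GammaA A g g z * ((g z)⁻¹ * (g z)⁻¹) := by
    funext z
    simp only [GammaA, hlogw]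
    rw [Finset.sum_mul]
    exact Finset.sum_congr rfl fun k _ => by ring
  have hLlog : hormL A (fun y => Real.log (g y))
      = fun z => hormL A g z * (g z)⁻¹ - GammaA A g g z * ((g z)⁻¹ * (g z)⁻¹) := by
    funext z
    simp only [hormL, GammaA, hlogw]
    rw [Finset.sum_mul, Finset.sum_mul, ← Finset.sum_sub_distrib]
    refine Finset.sum_congr rfl fun k _ => ?_
    rw [nablaA_mul (A k) (hud k z) (hqd z), dq]
    ring
  have hDΓlog : ∀ k, nablaA (A k)
        (GammaA A (fun y => Real.log (g y)) (fun y => Real.log (g y)))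
      = fun z => nablaA (A k) (GammaA A g g) z * ((g z)⁻¹ * (g z)⁻¹)
          + GammaA A g g z *
            (-2 * nablaA (A k) g z * ((g z)⁻¹ * (g z)⁻¹ * (g z)⁻¹)) := by
    intro k; funext z
    rw [hΓlog, nablaA_mul (A k) (hΓd z) (hqqd z), dqq]
  have hF2d : ∀ k, Differentiable ℝ
      (fun z => -2 * nablaA (A k) g z * ((g z)⁻¹ * (g z)⁻¹ * (g z)⁻¹)) :=
    fun k => ((hud k).const_mul (-2)).mul hqqqd
  have key : ∀ k, nablaA (A k) (nablaA (A k)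
        (GammaA A (fun y => Real.log (g y)) (fun y => Real.log (g y)))) x =
      nablaA (A k) (nablaA (A k) (GammaA A g g)) x * ((g x)⁻¹ * (g x)⁻¹)
      - 4 * (nablaA (A k) g x * nablaA (A k) (GammaA A g g) x)
          * ((g x)⁻¹ * (g x)⁻¹ * (g x)⁻¹)
      - 2 * (GammaA A g g x * nablaA (A k) (nablaA (A k) g) x)
          * ((g x)⁻¹ * (g x)⁻¹ * (g x)⁻¹)
      + 6 * (GammaA A g g x * (nablaA (A k) g x * nablaA (A k) g x))
          * ((g x)⁻¹ * (g x)⁻¹ * (g x)⁻¹ * (g x)⁻¹) := by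
    intro k
    rw [hDΓlog k]
    rw [nablaA_add (A k) ((hGd k x).fun_mul (hqqd x)) ((hΓd x).fun_mul (hF2d k x))]
    rw [nablaA_mul (A k) (hGd k x) (hqqd x), dqq]
    rw [nablaA_mul (A k) (hΓd x) (hF2d k x)]
    rw [nablaA_mul (A k) (((hud k).const_mul (-2)) x) (hqqqd x)]
    rw [nablaA_const_mul (A k) (hud k x) (-2), dqqq]
    ring
  have hDLlog : ∀ k, nablaA (A k) (hormL A (fun y => Real.log (g y))) x =
      nablaA (A k) (hormL A g) x * (g x)⁻¹
      - hormL A g x * nablaA (A k) g x * ((g x)⁻¹ * (g x)⁻¹)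
      - nablaA (A k) (GammaA A g g) x * ((g x)⁻¹ * (g x)⁻¹)
      + 2 * (GammaA A g g x * nablaA (A k) g x)
          * ((g x)⁻¹ * (g x)⁻¹ * (g x)⁻¹) := by
    intro k
    rw [hLlog]
    rw [nablaA_sub (A k) ((hLgd x).fun_mul (hqd x)) ((hΓd x).fun_mul (hqqd x))]
    rw [nablaA_mul (A k) (hLgd x) (hqd x), nablaA_mul (A k) (hΓd x) (hqqd x), dq, dqq]
    ring
  have step1 : Gamma2A A (fun y => Real.log (g y)) x =
      ∑ k, (1 / 2 * nablaA (A k) (nablaA (A k)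
          (GammaA A (fun y => Real.log (g y)) (fun y => Real.log (g y)))) x
        - nablaA (A k) (fun y => Real.log (g y)) x
            * nablaA (A k) (hormL A (fun y => Real.log (g y))) x) := by
    rw [Finset.sum_sub_distrib, ← Finset.mul_sum]
    rfl
  rw [step1]
  have step2 : ∀ k ∈ Finset.univ, (1 / 2 * nablaA (A k) (nablaA (A k)
          (GammaA A (fun y => Real.log (g y)) (fun y => Real.log (g y)))) x
        - nablaA (A k) (fun y => Real.log (g y)) x
            * nablaA (A k) (hormL A (fun y => Real.log (g y))) x : ℝ)
      = 1 / 2 * ((g x)⁻¹ * (g x)⁻¹) * nablaA (A k) (nablaA (A k) (GammaA A g g)) x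
        + (-((g x)⁻¹ * (g x)⁻¹ * (g x)⁻¹))
            * (nablaA (A k) g x * nablaA (A k) (GammaA A g g) x)
        + (-(GammaA A g g x) * ((g x)⁻¹ * (g x)⁻¹ * (g x)⁻¹))
            * nablaA (A k) (nablaA (A k) g) x
        + (GammaA A g g x * ((g x)⁻¹ * (g x)⁻¹ * (g x)⁻¹ * (g x)⁻¹)
            + hormL A g x * ((g x)⁻¹ * (g x)⁻¹ * (g x)⁻¹))
            * (nablaA (A k) g x * nablaA (A k) g x)
        + (-((g x)⁻¹ * (g x)⁻¹))
            * (nablaA (A k) g x * nablaA (A k) (hormL A g) x) := by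
    intro k _
    rw [key k, hDLlog k, congrFun (hlogw k) x]
    ring
  rw [Finset.sum_congr rfl step2]
  simp only [Finset.sum_add_distrib, ← Finset.mul_sum]
  simp only [Gamma2A, hormL, GammaA]
  field_simp
  ring
end

section
/- Let H be a separable real Hilbert space with Hilbert (orthonormal) basis (e_i)_{i ∈ ℕ}, and let a : ℕ → (H → ℝ) be functions such that each a_i is Fréchet differentiable, and there are constants K_i ≥ 0 with: |a_i(x)| ≤ K_i for all x, a_i is K_i-Lipschitz, the derivative map x ↦ D a_i(x) (valued in the dual H*) is K_i-Lipschitz, and M² := ∑_{i} K_i² < ∞. Then for every x ∈ H the vector A(x) := ∑_i a_i(x)·e_i is a well-defined element of H, the series F(x) := ∑_i (D a_i(x)[A(x)])·e_i converges in H, and the resulting map F : H → H is Lipschitz with Lipschitz constant 2M²; i.e., |F(x) − F(y)| ≤ 2M²·|x − y| for all x, y ∈ H. -/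
open scoped BigOperators

section aux
variable {H : Type*} [NormedAddCommGroup H] [InnerProductSpace ℝ H] [CompleteSpace H]

lemma hb_summable (b : HilbertBasis ℕ ℝ H) {f : ℕ → ℝ} (hf : Summable fun i => f i ^ 2) :
    Summable fun i => f i • (b i : H) := by
  have hV := b.orthonormal.orthogonalFamily
  have := (hV.summable_iff_norm_sq_summable f).2
    (by simpa [Real.norm_eq_abs, sq_abs] using hf)
  simpa [LinearIsometry.toSpanSingleton_apply] using this

lemma hb_norm_sq (b : HilbertBasis ℕ ℝ H) {f : ℕ → ℝ} (hf : Summable fun i => f i ^ 2) :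
    ‖∑' i, f i • (b i : H)‖ ^ 2 = ∑' i, f i ^ 2 := by
  have hV := b.orthonormal.orthogonalFamily
  have hs := (hb_summable b hf).hasSum
  have h2 : HasSum (fun i => f i ^ 2) (‖∑' i, f i • (b i : H)‖ ^ 2) := by
    have ht : Filter.Tendsto (fun s : Finset ℕ => ‖∑ i ∈ s, f i • (b i : H)‖ ^ 2)
        Filter.atTop (nhds (‖∑' i, f i • (b i : H)‖ ^ 2)) :=
      (((continuous_pow 2).comp continuous_norm).continuousAt.tendsto).comp hs
    have heq : ∀ s : Finset ℕ, ‖∑ i ∈ s, f i • (b i : H)‖ ^ 2 = ∑ i ∈ s, f i ^ 2 := by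
      intro s
      have := hV.norm_sum f s
      simpa [LinearIsometry.toSpanSingleton_apply, Real.norm_eq_abs, sq_abs] using this
    simpa only [HasSum, heq, SummationFilter.unconditional_filter] using ht
  exact (h2.tsum_eq).symm ▸ rfl

lemma le_of_sq_le_sq' {x y : ℝ} (hy : 0 ≤ y) (h : x ^ 2 ≤ y ^ 2) (hx : 0 ≤ x) : x ≤ y := by
  nlinarith

end aux

/-- Lipschitz estimate on the Itô-correction drift `F(x) = ∑ᵢ (Daᵢ(x)[A(x)]) eᵢ`, where
`A(x) = ∑ᵢ aᵢ(x) eᵢ`, for coefficients `aᵢ` with `C¹,¹`-norms `Kᵢ` square-summable with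
`∑ Kᵢ² = M²`: `A(x)` and `F(x)` are well-defined elements of `H`, and
`|F(x) - F(y)| ≤ 2M²|x - y|`. -/
theorem ito_drift_lipschitz {H : Type*} [NormedAddCommGroup H] [InnerProductSpace ℝ H]
    [CompleteSpace H] (b : HilbertBasis ℕ ℝ H) (a : ℕ → H → ℝ) (K : ℕ → ℝ)
    (hK : ∀ i, 0 ≤ K i)
    (hdiff : ∀ i, Differentiable ℝ (a i))
    (hbd : ∀ i x, |a i x| ≤ K i)
    (hlipa : ∀ i x y, |a i x - a i y| ≤ K i * ‖x - y‖)
    (hlipD : ∀ i x y, ‖fderiv ℝ (a i) x - fderiv ℝ (a i) y‖ ≤ K i * ‖x - y‖)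
    (M : ℝ) (hM2 : Summable fun i => K i ^ 2) (hMsq : M ^ 2 = ∑' i, K i ^ 2) :
    (∀ x : H, Summable fun i => a i x • (b i : H)) ∧
    (∀ x : H,
      Summable fun i =>
        (fderiv ℝ (a i) x (∑' j, a j x • (b j : H))) • (b i : H)) ∧
    (∀ x y : H,
      ‖(∑' i, (fderiv ℝ (a i) x (∑' j, a j x • (b j : H))) • (b i : H)) -
          (∑' i, (fderiv ℝ (a i) y (∑' j, a j y • (b j : H))) • (b i : H))‖ ≤
        2 * M ^ 2 * ‖x - y‖) := by
  -- norm of fderiv bounded by K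
  have hlw : ∀ i, LipschitzWith ⟨K i, hK i⟩ (a i) := fun i =>
    LipschitzWith.of_dist_le_mul fun x y => by
      rw [Real.dist_eq, dist_eq_norm]; exact hlipa i x y
  have hDnorm : ∀ i (x : H), ‖fderiv ℝ (a i) x‖ ≤ K i := fun i x => by
    exact norm_fderiv_le_of_lipschitz ℝ (hlw i) (x₀ := x)
  -- summability of coefficient squares
  have hsq : ∀ x : H, Summable fun i => a i x ^ 2 := fun x =>
    hM2.of_nonneg_of_le (fun i => sq_nonneg _) fun i => by
      calc a i x ^ 2 = |a i x| ^ 2 := (sq_abs _).symm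
        _ ≤ K i ^ 2 := by nlinarith [hbd i x, abs_nonneg (a i x)]
  have hsumA : ∀ x : H, Summable fun i => a i x • (b i : H) := fun x => hb_summable b (hsq x)
  set A : H → H := fun x => ∑' j, a j x • (b j : H) with hA
  have hM0 : (0:ℝ) ≤ M ^ 2 := sq_nonneg M
  have hAsq : ∀ x, ‖A x‖ ^ 2 ≤ M ^ 2 := by
    intro x
    rw [hA, hb_norm_sq b (hsq x), hMsq]
    exact Summable.tsum_le_tsum (fun i => by
      calc a i x ^ 2 = |a i x| ^ 2 := (sq_abs _).symm
        _ ≤ K i ^ 2 := by nlinarith [hbd i x, abs_nonneg (a i x)]) (hsq x) hM2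
  have hAle : ∀ x, ‖A x‖ ≤ |M| := fun x =>
    le_of_sq_le_sq' (abs_nonneg M) (by rw [sq_abs]; exact hAsq x) (norm_nonneg _)
  -- the coefficients of F
  set g : H → ℕ → ℝ := fun x i => fderiv ℝ (a i) x (A x) with hg
  have hgbd : ∀ (x : H) i, |g x i| ≤ K i * |M| := by
    intro x i
    calc |g x i| = ‖fderiv ℝ (a i) x (A x)‖ := rfl
      _ ≤ ‖fderiv ℝ (a i) x‖ * ‖A x‖ := (fderiv ℝ (a i) x).le_opNorm _
      _ ≤ K i * |M| := mul_le_mul (hDnorm i x) (hAle x) (norm_nonneg _) (hK i)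
  have hgsq : ∀ x : H, Summable fun i => g x i ^ 2 := by
    intro x
    refine (hM2.mul_right (M ^ 2)).of_nonneg_of_le (fun i => sq_nonneg _) fun i => ?_
    have h := hgbd x i
    calc g x i ^ 2 = |g x i| ^ 2 := (sq_abs _).symm
      _ ≤ (K i * |M|) ^ 2 := by nlinarith [abs_nonneg (g x i)]
      _ = K i ^ 2 * M ^ 2 := by rw [mul_pow, sq_abs]
  have hsumF : ∀ x : H, Summable fun i => g x i • (b i : H) := fun x => hb_summable b (hgsq x)
  refine ⟨hsumA, hsumF, ?_⟩
  intro x y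
  -- bound ‖A x - A y‖
  have hsqd : Summable fun i => (a i x - a i y) ^ 2 :=
    (hM2.mul_right (‖x - y‖ ^ 2)).of_nonneg_of_le (fun i => sq_nonneg _) fun i => by
      have h := hlipa i x y
      calc (a i x - a i y) ^ 2 = |a i x - a i y| ^ 2 := (sq_abs _).symm
        _ ≤ (K i * ‖x - y‖) ^ 2 := by nlinarith [abs_nonneg (a i x - a i y), mul_nonneg (hK i) (norm_nonneg (x - y))]
        _ = K i ^ 2 * ‖x - y‖ ^ 2 := by ring
  have hAd : ‖A x - A y‖ ≤ |M| * ‖x - y‖ := by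
    have hAd' : A x - A y = ∑' i, (a i x - a i y) • (b i : H) := by
      rw [hA]
      rw [← Summable.tsum_sub (hsumA x) (hsumA y)]
      exact tsum_congr fun i => (sub_smul _ _ _).symm
    refine le_of_sq_le_sq' (mul_nonneg (abs_nonneg M) (norm_nonneg _)) ?_ (norm_nonneg _)
    rw [hAd', hb_norm_sq b hsqd, mul_pow, sq_abs]
    calc ∑' i, (a i x - a i y) ^ 2 ≤ ∑' i, K i ^ 2 * ‖x - y‖ ^ 2 := by
          refine Summable.tsum_le_tsum (fun i => ?_) hsqd (hM2.mul_right _)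
          have h := hlipa i x y
          calc (a i x - a i y) ^ 2 = |a i x - a i y| ^ 2 := (sq_abs _).symm
            _ ≤ (K i * ‖x - y‖) ^ 2 := by nlinarith [abs_nonneg (a i x - a i y), mul_nonneg (hK i) (norm_nonneg (x - y))]
            _ = K i ^ 2 * ‖x - y‖ ^ 2 := by ring
      _ = M ^ 2 * ‖x - y‖ ^ 2 := by rw [tsum_mul_right, ← hMsq]
  -- bound the coefficient differences
  have hgd : ∀ i, |g x i - g y i| ≤ 2 * K i * |M| * ‖x - y‖ := by
    intro i
    have hsplit : g x i - g y i =
        (fderiv ℝ (a i) x - fderiv ℝ (a i) y) (A x) + fderiv ℝ (a i) y (A x - A y) := by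
      simp [hg, ContinuousLinearMap.sub_apply, map_sub]
    rw [hsplit]
    have h1 : |(fderiv ℝ (a i) x - fderiv ℝ (a i) y) (A x)| ≤ K i * ‖x - y‖ * |M| :=
      calc |(fderiv ℝ (a i) x - fderiv ℝ (a i) y) (A x)|
          ≤ ‖fderiv ℝ (a i) x - fderiv ℝ (a i) y‖ * ‖A x‖ :=
            (fderiv ℝ (a i) x - fderiv ℝ (a i) y).le_opNorm _
        _ ≤ K i * ‖x - y‖ * |M| :=
            mul_le_mul (hlipD i x y) (hAle x) (norm_nonneg _)
              (mul_nonneg (hK i) (norm_nonneg _))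
    have h2 : |fderiv ℝ (a i) y (A x - A y)| ≤ K i * (|M| * ‖x - y‖) :=
      calc |fderiv ℝ (a i) y (A x - A y)|
          ≤ ‖fderiv ℝ (a i) y‖ * ‖A x - A y‖ := (fderiv ℝ (a i) y).le_opNorm _
        _ ≤ K i * (|M| * ‖x - y‖) :=
            mul_le_mul (hDnorm i y) hAd (norm_nonneg _) (hK i)
    calc |(fderiv ℝ (a i) x - fderiv ℝ (a i) y) (A x) + fderiv ℝ (a i) y (A x - A y)|
        ≤ |(fderiv ℝ (a i) x - fderiv ℝ (a i) y) (A x)| + |fderiv ℝ (a i) y (A x - A y)| :=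
          abs_add_le _ _
      _ ≤ K i * ‖x - y‖ * |M| + K i * (|M| * ‖x - y‖) := add_le_add h1 h2
      _ = 2 * K i * |M| * ‖x - y‖ := by ring
  have hgdsq : Summable fun i => (g x i - g y i) ^ 2 :=
    (hM2.mul_right (4 * M ^ 2 * ‖x - y‖ ^ 2)).of_nonneg_of_le (fun i => sq_nonneg _) fun i => by
      have h := hgd i
      have hnn : (0:ℝ) ≤ 2 * K i * |M| * ‖x - y‖ :=
        mul_nonneg (mul_nonneg (mul_nonneg (by norm_num) (hK i)) (abs_nonneg M)) (norm_nonneg _)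
      calc (g x i - g y i) ^ 2 = |g x i - g y i| ^ 2 := (sq_abs _).symm
        _ ≤ (2 * K i * |M| * ‖x - y‖) ^ 2 := by nlinarith [abs_nonneg (g x i - g y i)]
        _ = K i ^ 2 * (4 * M ^ 2 * ‖x - y‖ ^ 2) := by rw [mul_pow, mul_pow, mul_pow, sq_abs]; ring
  -- conclude
  have hdiffF : (∑' i, g x i • (b i : H)) - (∑' i, g y i • (b i : H)) =
      ∑' i, (g x i - g y i) • (b i : H) := by
    rw [← Summable.tsum_sub (hsumF x) (hsumF y)]
    exact tsum_congr fun i => (sub_smul _ _ _).symm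
  have key : ‖(∑' i, g x i • (b i : H)) - (∑' i, g y i • (b i : H))‖ ≤ 2 * M ^ 2 * ‖x - y‖ := by
    refine le_of_sq_le_sq'
      (mul_nonneg (mul_nonneg (by norm_num) hM0) (norm_nonneg _)) ?_ (norm_nonneg _)
    rw [hdiffF, hb_norm_sq b hgdsq]
    calc ∑' i, (g x i - g y i) ^ 2
        ≤ ∑' i, K i ^ 2 * (4 * M ^ 2 * ‖x - y‖ ^ 2) := by
          refine Summable.tsum_le_tsum (fun i => ?_) hgdsq (hM2.mul_right _)
          have h := hgd i
          have hnn : (0:ℝ) ≤ 2 * K i * |M| * ‖x - y‖ :=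
            mul_nonneg (mul_nonneg (mul_nonneg (by norm_num) (hK i)) (abs_nonneg M)) (norm_nonneg _)
          calc (g x i - g y i) ^ 2 = |g x i - g y i| ^ 2 := (sq_abs _).symm
            _ ≤ (2 * K i * |M| * ‖x - y‖) ^ 2 := by nlinarith [abs_nonneg (g x i - g y i)]
            _ = K i ^ 2 * (4 * M ^ 2 * ‖x - y‖ ^ 2) := by
                rw [mul_pow, mul_pow, mul_pow, sq_abs]; ring
      _ = (2 * M ^ 2 * ‖x - y‖) ^ 2 := by rw [tsum_mul_right, ← hMsq]; ring
  simpa [hg, hA] using key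
end

section
/- Let t > 0 and let x : ℕ → ℝ be a sequence with ∑_j x_j² < ∞. For each j ≥ 1 let ν_j be the real Gaussian measure with mean exp(−j⁶·t)·x_j and variance (1 − exp(−2 j⁶ t))/(2 j⁶). Then the series ∑_j ν_j({ y ∈ ℝ : |y| > j^{−1/4} }) converges. -/
open MeasureTheory ProbabilityTheory Real Filter Set Topology

lemma integral_Ioi_id_mul_exp {b : ℝ} (hb : 0 < b) :
    ∫ y in Set.Ioi (0:ℝ), y * Real.exp (-b * y ^ 2) = 1 / (2 * b) := by
  have h := integral_Ioi_of_hasDerivAt_of_tendsto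
      (f := fun y : ℝ => -Real.exp (-b * y ^ 2) / (2 * b))
      (f' := fun y : ℝ => y * Real.exp (-b * y ^ 2)) (a := 0) (m := 0)
      ?_ ?_ ?_ ?_
  · rw [h]; simp; ring
  · exact (Continuous.continuousWithinAt (by fun_prop))
  · intro y _
    have h1 : HasDerivAt (fun y : ℝ => -b * y ^ 2) (-b * (2 * y ^ 1)) y := by
      simpa using (hasDerivAt_pow 2 y).const_mul (-b)
    have h2 := ((h1.exp).neg).div_const (2 * b)
    convert h2 using 1
    all_goals (try rfl)
    field_simp
  · exact (integrable_mul_exp_neg_mul_sq hb).integrableOn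
  · have h3 : Tendsto (fun y : ℝ => -b * y ^ 2) atTop atBot := by
      have h4 : Tendsto (fun y : ℝ => b * y ^ 2) atTop atTop :=
        (tendsto_pow_atTop (n := 2) (by norm_num)).const_mul_atTop hb
      simpa [Function.comp_def, neg_mul] using tendsto_neg_atTop_atBot.comp h4
    have h5 := (Real.tendsto_exp_atBot.comp h3).neg.div_const (2 * b)
    simpa using h5

lemma centered_gaussian_tail {v c : ℝ} (hv : 0 < v) (hc : 0 < c) :
    gaussianReal 0 v.toNNReal {u : ℝ | c < |u|} ≤ ENNReal.ofReal (Real.sqrt v / c) := by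
  have hvN : v.toNNReal ≠ 0 := ne_of_gt (Real.toNNReal_pos.2 hv)
  have hvv : ((v.toNNReal : ℝ)) = v := Real.coe_toNNReal _ hv.le
  set b : ℝ := (2 * v)⁻¹ with hbdef
  have hb : 0 < b := by positivity
  have hK : (0:ℝ) < Real.sqrt (2 * π * v) := Real.sqrt_pos.2 (by positivity)
  have hpdf_eq : ∀ u : ℝ, gaussianPDFReal 0 v.toNNReal u
      = (Real.sqrt (2 * π * v))⁻¹ * Real.exp (-b * u ^ 2) := by
    intro u
    rw [gaussianPDFReal, hvv]
    congr 1
    rw [hbdef]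
    congr 1
    field_simp
    ring
  have hS : MeasurableSet {u : ℝ | c < |u|} :=
    (isOpen_lt continuous_const continuous_abs).measurableSet
  have hrw : (fun u : ℝ => (|u| / c) * ((Real.sqrt (2 * π * v))⁻¹ * Real.exp (-b * u ^ 2)))
      = fun u => ((Real.sqrt (2 * π * v))⁻¹ / c) * |u * Real.exp (-b * u ^ 2)| := by
    funext u; rw [abs_mul, abs_of_pos (Real.exp_pos _)]; ring
  have hg_int : Integrable (fun u : ℝ => (|u| / c) * gaussianPDFReal 0 v.toNNReal u) := by
    simp_rw [hpdf_eq, hrw]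
    exact (integrable_mul_exp_neg_mul_sq hb).abs.const_mul _
  rw [gaussianReal_apply_eq_integral _ hvN]
  apply ENNReal.ofReal_le_ofReal
  have step1 : ∫ u in {u : ℝ | c < |u|}, gaussianPDFReal 0 v.toNNReal u
      ≤ ∫ u in {u : ℝ | c < |u|}, (|u| / c) * gaussianPDFReal 0 v.toNNReal u := by
    refine setIntegral_mono_on (integrable_gaussianPDFReal 0 _).integrableOn
      hg_int.integrableOn hS (fun u hu => ?_)
    have h1 : (1:ℝ) ≤ |u| / c := (one_le_div hc).2 hu.le
    nlinarith [gaussianPDFReal_nonneg (0:ℝ) v.toNNReal u]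
  have step2 : ∫ u in {u : ℝ | c < |u|}, (|u| / c) * gaussianPDFReal 0 v.toNNReal u
      ≤ ∫ u : ℝ, (|u| / c) * gaussianPDFReal 0 v.toNNReal u :=
    setIntegral_le_integral hg_int (ae_of_all _ fun u =>
      mul_nonneg (div_nonneg (abs_nonneg _) hc.le) (gaussianPDFReal_nonneg _ _ _))
  have step3 : ∫ u : ℝ, (|u| / c) * gaussianPDFReal 0 v.toNNReal u
      = (Real.sqrt (2 * π * v))⁻¹ / c * (2 * v) := by
    simp_rw [hpdf_eq, hrw]
    rw [integral_const_mul]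
    congr 1
    have habs : ∀ u : ℝ, |u * Real.exp (-b * u ^ 2)|
        = (fun x : ℝ => x * Real.exp (-b * x ^ 2)) |u| := by
      intro u
      simp only [abs_mul, abs_of_pos (Real.exp_pos _), sq_abs]
    calc ∫ u : ℝ, |u * Real.exp (-b * u ^ 2)|
        = ∫ u : ℝ, (fun x : ℝ => x * Real.exp (-b * x ^ 2)) |u| := by simp_rw [habs]
      _ = 2 * ∫ u in Set.Ioi (0:ℝ), u * Real.exp (-b * u ^ 2) :=
          integral_comp_abs (f := fun x : ℝ => x * Real.exp (-b * x ^ 2))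
      _ = 2 * (1 / (2 * b)) := by rw [integral_Ioi_id_mul_exp hb]
      _ = 2 * v := by rw [hbdef]; field_simp
  have step4 : (Real.sqrt (2 * π * v))⁻¹ / c * (2 * v) ≤ Real.sqrt v / c := by
    rw [div_mul_eq_mul_div, div_le_div_iff_of_pos_right hc]
    rw [inv_mul_le_iff₀ hK]
    have h2pi : (2:ℝ) ≤ Real.sqrt (2 * π) := by
      rw [Real.le_sqrt (by norm_num) (by positivity)]
      nlinarith [Real.pi_gt_three]
    have : Real.sqrt v * Real.sqrt (2 * π * v) = Real.sqrt (2 * π) * v := by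
      rw [show 2 * π * v = (2*π) * v by ring, Real.sqrt_mul (by positivity)]
      rw [← mul_assoc, mul_comm (Real.sqrt v), mul_assoc, Real.mul_self_sqrt hv.le]
    rw [mul_comm (Real.sqrt (2 * π * v))] at *
    rw [this]
    nlinarith
  linarith

lemma gaussian_tail_bound {m v r : ℝ} (hv : 0 < v) (hr : 0 < r) (hm : |m| ≤ r / 2) :
    gaussianReal m v.toNNReal {y : ℝ | r < |y|}
      ≤ ENNReal.ofReal (2 * Real.sqrt v / r) := by
  have hmap : Measure.map (fun u : ℝ => u + m) (gaussianReal 0 v.toNNReal)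
      = gaussianReal m v.toNNReal := by
    simpa using gaussianReal_map_add_const (μ := 0) (v := v.toNNReal) m
  have hS : MeasurableSet {y : ℝ | r < |y|} :=
    (isOpen_lt continuous_const continuous_abs).measurableSet
  rw [← hmap, Measure.map_apply (measurable_add_const m) hS]
  have hsub : (fun u : ℝ => u + m) ⁻¹' {y : ℝ | r < |y|} ⊆ {u : ℝ | r / 2 < |u|} := by
    intro u hu
    simp only [Set.mem_preimage, Set.mem_setOf_eq] at hu ⊢
    have := abs_add_le u m
    linarith [abs_add_le u m]
  calc gaussianReal 0 v.toNNReal ((fun u : ℝ => u + m) ⁻¹' {y : ℝ | r < |y|})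
      ≤ gaussianReal 0 v.toNNReal {u : ℝ | r / 2 < |u|} := measure_mono hsub
    _ ≤ ENNReal.ofReal (Real.sqrt v / (r / 2)) := centered_gaussian_tail hv (by linarith)
    _ = ENNReal.ofReal (2 * Real.sqrt v / r) := by rw [div_div_eq_mul_div, mul_comm]

/-- For `t > 0` and a square-summable sequence `x`, the Gaussian probabilities that the
`j`-th Ornstein-Uhlenbeck coordinate (eigenvalue `a_j = j⁶`, mean `e^{-j⁶ t} x_j`, variance
`(1 - e^{-2 j⁶ t})/(2 j⁶)`) exceeds `j^{-1/4}` in absolute value are summable over `j ≥ 1`. -/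
theorem OU_coupling_gaussian_tail_summable
    (t : ℝ) (ht : 0 < t) (x : ℕ → ℝ) (hx : Summable fun j => x j ^ 2) :
    (∑' j : ℕ,
        gaussianReal (Real.exp (-((j + 1 : ℕ) : ℝ) ^ 6 * t) * x (j + 1))
          (((1 - Real.exp (-2 * ((j + 1 : ℕ) : ℝ) ^ 6 * t)) /
            (2 * ((j + 1 : ℕ) : ℝ) ^ 6)).toNNReal)
          {y : ℝ | ((j + 1 : ℕ) : ℝ) ^ (-(1 : ℝ) / 4) < |y|}) < ⊤ := by
  set cn : ℕ → ℝ := fun j => ((j + 1 : ℕ) : ℝ) with hcn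
  have hcn1 : ∀ j, (1:ℝ) ≤ cn j := fun j => by
    simp only [hcn]; exact_mod_cast Nat.one_le_iff_ne_zero.2 (Nat.succ_ne_zero j)
  have hcnpos : ∀ j, (0:ℝ) < cn j := fun j => lt_of_lt_of_le one_pos (hcn1 j)
  have hvpos : ∀ j, 0 < (1 - Real.exp (-2 * cn j ^ 6 * t)) / (2 * cn j ^ 6) := by
    intro j
    apply div_pos
    · have : Real.exp (-2 * cn j ^ 6 * t) < 1 :=
        Real.exp_lt_one_iff.2 (by nlinarith [pow_pos (hcnpos j) 6])
      linarith
    · positivity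
  have hx0 : Tendsto (fun j => x j ^ 2) atTop (𝓝 0) := hx.tendsto_atTop_zero
  have hxev : ∀ᶠ j in atTop, |x (j + 1)| ≤ 1 := by
    have h1 : ∀ᶠ j in atTop, x j ^ 2 < 1 := hx0.eventually_lt_const one_pos
    filter_upwards [(tendsto_add_atTop_nat 1).eventually h1] with j hj
    nlinarith [abs_nonneg (x (j+1)), sq_abs (x (j+1))]
  have hdecay : Tendsto (fun j : ℕ => cn j ^ ((1:ℝ)/4) * Real.exp (-cn j ^ 6 * t))
      atTop (𝓝 0) := by
    have hbig : Tendsto (fun n : ℕ => (n:ℝ) ^ 1 * (Real.exp (-t)) ^ n) atTop (𝓝 0) :=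
      tendsto_pow_const_mul_const_pow_of_abs_lt_one 1
        (by rw [abs_of_pos (Real.exp_pos _)]; exact Real.exp_lt_one_iff.2 (by linarith))
    have hbig' := hbig.comp (tendsto_add_atTop_nat 1)
    refine squeeze_zero (fun j => by positivity) (fun j => ?_) hbig'
    have e1 : cn j ^ ((1:ℝ)/4) ≤ cn j := by
      calc cn j ^ ((1:ℝ)/4) ≤ cn j ^ (1:ℝ) :=
            Real.rpow_le_rpow_of_exponent_le (hcn1 j) (by norm_num)
        _ = cn j := Real.rpow_one _
    have e2 : Real.exp (-cn j ^ 6 * t) ≤ Real.exp (-t) ^ (j + 1) := by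
      rw [show Real.exp (-t) ^ (j+1) = Real.exp (((j+1:ℕ):ℝ) * (-t)) from
        (Real.exp_nat_mul _ _).symm]
      apply Real.exp_le_exp.2
      have : cn j ≤ cn j ^ 6 := le_self_pow₀ (hcn1 j) (by norm_num)
      simp only [hcn] at this ⊢
      nlinarith
    have hcomp : ((fun n : ℕ => (n:ℝ) ^ 1 * (Real.exp (-t)) ^ n) ∘ (fun a => a + 1)) j
        = cn j * Real.exp (-t) ^ (j+1) := by simp [Function.comp, hcn]
    rw [hcomp]
    exact mul_le_mul e1 e2 (Real.exp_pos _).le (hcnpos j).le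
  have hmev : ∀ᶠ j in atTop,
      |Real.exp (-cn j ^ 6 * t) * x (j + 1)| ≤ cn j ^ (-(1:ℝ)/4) / 2 := by
    have hhalf : ∀ᶠ j in atTop,
        cn j ^ ((1:ℝ)/4) * Real.exp (-cn j ^ 6 * t) < 1/2 :=
      hdecay.eventually_lt_const (by norm_num)
    filter_upwards [hxev, hhalf] with j h1 h2
    have hrinv : cn j ^ (-(1:ℝ)/4) * cn j ^ ((1:ℝ)/4) = 1 := by
      rw [← Real.rpow_add (hcnpos j)]; norm_num
    have hrpos : (0:ℝ) < cn j ^ (-(1:ℝ)/4) := Real.rpow_pos_of_pos (hcnpos j) _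
    have he : Real.exp (-cn j ^ 6 * t) ≤ cn j ^ (-(1:ℝ)/4) / 2 := by
      have h3 := mul_le_mul_of_nonneg_left h2.le hrpos.le
      calc Real.exp (-cn j ^ 6 * t)
          = (cn j ^ (-(1:ℝ)/4) * cn j ^ ((1:ℝ)/4)) * Real.exp (-cn j ^ 6 * t) := by
            rw [hrinv, one_mul]
        _ = cn j ^ (-(1:ℝ)/4) * (cn j ^ ((1:ℝ)/4) * Real.exp (-cn j ^ 6 * t)) := by ring
        _ ≤ cn j ^ (-(1:ℝ)/4) * (1/2) := h3
        _ = cn j ^ (-(1:ℝ)/4) / 2 := by ring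
    rw [abs_mul, abs_of_pos (Real.exp_pos _)]
    calc Real.exp (-cn j ^ 6 * t) * |x (j+1)| ≤ Real.exp (-cn j ^ 6 * t) * 1 :=
          mul_le_mul_of_nonneg_left h1 (Real.exp_pos _).le
      _ = Real.exp (-cn j ^ 6 * t) := mul_one _
      _ ≤ cn j ^ (-(1:ℝ)/4) / 2 := he
  obtain ⟨N, hN⟩ := eventually_atTop.1 hmev
  set g : ℕ → ℝ := fun j => 2 * cn j ^ (-(11:ℝ)/4) with hg
  have hgsum : Summable g := by
    have h1 : Summable (fun n : ℕ => (n:ℝ) ^ (-(11:ℝ)/4)) :=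
      Real.summable_nat_rpow.2 (by norm_num)
    have h2 : Summable (fun j : ℕ => cn j ^ (-(11:ℝ)/4)) :=
      h1.comp_injective Nat.succ_injective
    exact h2.mul_left 2
  have hgnn : ∀ j, 0 ≤ g j := fun j => by
    have := (Real.rpow_pos_of_pos (hcnpos j) (-(11:ℝ)/4)).le
    simp only [hg]; positivity
  have hFbound : ∀ j,
      gaussianReal (Real.exp (-cn j ^ 6 * t) * x (j + 1))
          (((1 - Real.exp (-2 * cn j ^ 6 * t)) / (2 * cn j ^ 6)).toNNReal)
          {y : ℝ | cn j ^ (-(1:ℝ)/4) < |y|}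
        ≤ (if j < N then 1 else 0) + ENNReal.ofReal (g j) := by
    intro j
    by_cases hj : j < N
    · rw [if_pos hj]
      exact le_trans prob_le_one le_self_add
    · rw [if_neg hj, zero_add]
      have hrpos : (0:ℝ) < cn j ^ (-(1:ℝ)/4) := Real.rpow_pos_of_pos (hcnpos j) _
      refine le_trans (gaussian_tail_bound (hvpos j) hrpos (hN j (le_of_not_gt hj)))
        (ENNReal.ofReal_le_ofReal ?_)
      have hsq : Real.sqrt ((1 - Real.exp (-2 * cn j ^ 6 * t)) / (2 * cn j ^ 6))
          ≤ cn j ^ (-(3:ℝ)) := by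
        rw [show cn j ^ (-(3:ℝ)) = Real.sqrt ((cn j ^ (-(3:ℝ)))^2) from
          (Real.sqrt_sq (Real.rpow_pos_of_pos (hcnpos j) _).le).symm]
        apply Real.sqrt_le_sqrt
        have h6 : (cn j ^ (-(3:ℝ)))^2 = (cn j ^ 6)⁻¹ := by
          rw [← Real.rpow_natCast (cn j ^ (-(3:ℝ))) 2, ← Real.rpow_mul (hcnpos j).le,
            show (-(3:ℝ)) * (2:ℕ) = -((6:ℕ):ℝ) by norm_num,
            Real.rpow_neg (hcnpos j).le, Real.rpow_natCast]
        rw [h6, div_le_iff₀ (by positivity)]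
        have hid : (cn j ^ 6)⁻¹ * (2 * cn j ^ 6) = 2 := by
          field_simp
          exact div_self (hcnpos j).ne'
        rw [hid]
        have := Real.exp_pos (-2 * cn j ^ 6 * t)
        linarith
      -- 2 * √v / r ≤ 2 * cn^{-11/4} = g j
      have hdiv : (2 : ℝ) * Real.sqrt ((1 - Real.exp (-2 * cn j ^ 6 * t)) / (2 * cn j ^ 6))
            / cn j ^ (-(1:ℝ)/4)
          = 2 * Real.sqrt ((1 - Real.exp (-2 * cn j ^ 6 * t)) / (2 * cn j ^ 6))
            * cn j ^ ((1:ℝ)/4) := by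
        rw [show (-(1:ℝ)/4) = -((1:ℝ)/4) by norm_num, Real.rpow_neg (hcnpos j).le,
          div_eq_mul_inv, inv_inv]
      rw [hdiv, hg]
      have h14 : (0:ℝ) < cn j ^ ((1:ℝ)/4) := Real.rpow_pos_of_pos (hcnpos j) _
      calc 2 * Real.sqrt ((1 - Real.exp (-2 * cn j ^ 6 * t)) / (2 * cn j ^ 6))
            * cn j ^ ((1:ℝ)/4)
          ≤ 2 * cn j ^ (-(3:ℝ)) * cn j ^ ((1:ℝ)/4) := by
            have := mul_le_mul_of_nonneg_right
              (mul_le_mul_of_nonneg_left hsq (by norm_num : (0:ℝ) ≤ 2)) h14.le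
            linarith
        _ = 2 * cn j ^ (-(11:ℝ)/4) := by
            rw [mul_assoc, ← Real.rpow_add (hcnpos j)]
            norm_num
  calc (∑' j : ℕ,
        gaussianReal (Real.exp (-cn j ^ 6 * t) * x (j + 1))
          (((1 - Real.exp (-2 * cn j ^ 6 * t)) / (2 * cn j ^ 6)).toNNReal)
          {y : ℝ | cn j ^ (-(1:ℝ)/4) < |y|})
      ≤ ∑' j : ℕ, ((if j < N then 1 else 0) + ENNReal.ofReal (g j)) :=
        ENNReal.tsum_le_tsum hFbound
    _ = (∑' j : ℕ, (if j < N then (1:ENNReal) else 0)) + ∑' j : ℕ, ENNReal.ofReal (g j) :=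
        ENNReal.tsum_add
    _ < ⊤ := by
        apply ENNReal.add_lt_top.2
        constructor
        · rw [tsum_eq_sum (s := Finset.range N)
            (fun b hb => if_neg (by simpa using hb))]
          exact ENNReal.sum_lt_top.2 fun a _ => by split_ifs <;> simp
        · rw [← ENNReal.ofReal_tsum_of_nonneg hgnn hgsum]
          exact ENNReal.ofReal_lt_top
end
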